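/- Fix a nonzero real number λ and let Y be a standard normal random variable. Then for every integer n≥0, E[(Y)_{n,λ}] = Σ_{k=0}^{⌊n/2⌋} Σ_{m=2k}^{n} ((2k)!/(2^k k!)) S_1(m,2k) {n brace m}_λ. -/

import Mathlib

open MeasureTheory Finset Real ProbabilityTheory
open scoped NNReal ENNReal

noncomputable section

/-- The degenerate falling factorial `(x)_{n,λ} = x(x-λ)⋯(x-(n-1)λ)`. -/
def dff (lam x : ℝ) (n : ℕ) : ℝ := ∏ i ∈ Finset.range n, (x - i * lam)

/-- The degenerate rising factorial `⟨x⟩_{n,λ} = x(x+λ)⋯(x+(n-1)λ)`. -/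
def drf (lam x : ℝ) (n : ℕ) : ℝ := ∏ i ∈ Finset.range n, (x + i * lam)

/-- The ordinary falling factorial `(x)_n = x(x-1)⋯(x-n+1)`. -/
def ffall (x : ℝ) (n : ℕ) : ℝ := ∏ i ∈ Finset.range n, (x - i)

/-- The ordinary rising factorial `⟨x⟩_n = x(x+1)⋯(x+n-1)`. -/
def frise (x : ℝ) (n : ℕ) : ℝ := ∏ i ∈ Finset.range n, (x + i)

/-- Composition `f ∘ g` of formal power series, valid when `g` has zero constant term. -/
def pscomp (f g : PowerSeries ℝ) : PowerSeries ℝ :=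
  PowerSeries.mk fun n =>
    ∑ k ∈ Finset.range (n + 1), PowerSeries.coeff k f * PowerSeries.coeff n (g ^ k)

/-- The degenerate moment generating series `F_Y = Σ_{n≥0} E[(Y)_{n,λ}] X^n/n!`. -/
def momSeries (lam : ℝ) {Ω : Type*} [MeasurableSpace Ω] (μ : Measure Ω) (Y : Ω → ℝ) :
    PowerSeries ℝ :=
  PowerSeries.mk fun n => (∫ ω, dff lam (Y ω) n ∂μ) / (n.factorial : ℝ)

/-- Taylor series at `u = 0` of the degenerate logarithm `log_λ(1+u)`:
`Σ_{n≥1} λ^{n-1} (1)_{n,1/λ} u^n/n!`. -/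
def degLogSeries (lam : ℝ) : PowerSeries ℝ :=
  PowerSeries.mk fun n => if n = 0 then 0 else lam ^ (n - 1) * dff (1 / lam) 1 n / (n.factorial : ℝ)

/-- `G_Y`, the degenerate cumulant generating series `log_{-λ}(F_Y)`, i.e. the substitution of
`F_Y - 1` into the Taylor series of `log_{-λ}(1+u)`. -/
def cumSeries (lam : ℝ) {Ω : Type*} [MeasurableSpace Ω] (μ : Measure Ω) (Y : Ω → ℝ) :
    PowerSeries ℝ :=
  pscomp (degLogSeries (-lam)) (momSeries lam μ Y - 1)

/-- The degenerate cumulants `κ_{n,λ}(Y) := n!·(coefficient of X^n in G_Y)`. -/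
def degCumulant (lam : ℝ) {Ω : Type*} [MeasurableSpace Ω] (μ : Measure Ω) (Y : Ω → ℝ)
    (n : ℕ) : ℝ :=
  (n.factorial : ℝ) * PowerSeries.coeff n (cumSeries lam μ Y)

/-- The probabilistic degenerate Stirling numbers of the second kind
`{n brace k}_{Y,λ} := n!·(coefficient of X^n in (F_Y - 1)^k/k!)`. -/
def braceY (lam : ℝ) {Ω : Type*} [MeasurableSpace Ω] (μ : Measure Ω) (Y : Ω → ℝ)
    (n k : ℕ) : ℝ :=
  (n.factorial : ℝ) * PowerSeries.coeff n ((momSeries lam μ Y - 1) ^ k) / (k.factorial : ℝ)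

/-- The probabilistic degenerate Stirling numbers of the first kind, defined by
`(-1)^{n-k} S_{1,λ}^Y(n,k) := n!·(coefficient of X^n in G_Y^k/k!)`. -/
def S1Y (lam : ℝ) {Ω : Type*} [MeasurableSpace Ω] (μ : Measure Ω) (Y : Ω → ℝ)
    (n k : ℕ) : ℝ :=
  (-1 : ℝ) ^ (n - k) * ((n.factorial : ℝ) * PowerSeries.coeff n ((cumSeries lam μ Y) ^ k) / (k.factorial : ℝ))

/-- Taylor series of `log(1+u)`: `Σ_{n≥1} (-1)^{n-1} u^n/n`. -/
def logSeries : PowerSeries ℝ :=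
  PowerSeries.mk fun n => if n = 0 then 0 else (-1 : ℝ) ^ (n - 1) / n

/-- `F^x := exp (x · Log F)` for a power series `F` with constant term `1`. -/
def psPow (F : PowerSeries ℝ) (x : ℝ) : PowerSeries ℝ :=
  pscomp (PowerSeries.exp ℝ) (PowerSeries.C (R := ℝ) x * pscomp logSeries (F - 1))

/-- `F ↦ F/X`, i.e. the shift sending `Σ a_{n+1} X^{n+1}` (with `a_0 = 0`) to `Σ a_{n+1} X^n`. -/
def shiftDown (F : PowerSeries ℝ) : PowerSeries ℝ :=
  PowerSeries.mk fun n => PowerSeries.coeff (n + 1) F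

/-- The probabilistic degenerate Bernoulli polynomials associated with `Y`:
`Σ_{n≥0} β_{n,λ}^Y(x) X^n/n! = (X/(F_Y-1))·F_Y^x`. -/
def probBernoulli (lam : ℝ) {Ω : Type*} [MeasurableSpace Ω] (μ : Measure Ω) (Y : Ω → ℝ)
    (n : ℕ) (x : ℝ) : ℝ :=
  (n.factorial : ℝ) *
    PowerSeries.coeff n ((shiftDown (momSeries lam μ Y - 1))⁻¹ * psPow (momSeries lam μ Y) x)

/-- The probabilistic degenerate Euler polynomials associated with `Y`:
`Σ_{n≥0} 𝓔_{n,λ}^Y(x) X^n/n! = (2/(F_Y+1))·F_Y^x`. -/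
def probEuler (lam : ℝ) {Ω : Type*} [MeasurableSpace Ω] (μ : Measure Ω) (Y : Ω → ℝ)
    (n : ℕ) (x : ℝ) : ℝ :=
  (n.factorial : ℝ) *
    PowerSeries.coeff n
      (PowerSeries.C (R := ℝ) 2 * (momSeries lam μ Y + 1)⁻¹ * psPow (momSeries lam μ Y) x)

lemma intg (j : ℕ) : Integrable (fun x : ℝ => x ^ j * Real.exp (-(x ^ 2 / 2))) := by
  have h := integrable_rpow_mul_exp_neg_mul_sq (b := 1/2) one_half_pos
    (s := (j : ℝ)) (by have := j.cast_nonneg (α := ℝ); linarith)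
  have he : (fun x : ℝ => x ^ (j : ℝ) * Real.exp (-(1/2) * x ^ 2))
      = fun x : ℝ => x ^ j * Real.exp (-(x ^ 2 / 2)) := by
    funext x
    rw [Real.rpow_natCast]
    congr 1
    ring
  rwa [he] at h

def M (j : ℕ) : ℝ := ∫ x : ℝ, x ^ j * Real.exp (-(x ^ 2 / 2))

lemma hM0 : M 0 = Real.sqrt (2 * Real.pi) := by
  have h := integral_gaussian (1/2)
  have : (fun x : ℝ => Real.exp (-(1/2) * x ^ 2)) = fun x : ℝ => Real.exp (-(x ^ 2 / 2)) := by
    funext x; congr 1; ring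
  rw [this] at h
  simp only [M, pow_zero, one_mul]
  rw [h, show Real.pi / (1/2) = 2 * Real.pi by ring]

lemma hModd (k : ℕ) : M (2 * k + 1) = 0 := by
  have h := integral_neg_eq_self (fun x : ℝ => x ^ (2 * k + 1) * Real.exp (-(x ^ 2 / 2))) volume
  have h2 : (fun x : ℝ => (-x) ^ (2 * k + 1) * Real.exp (-((-x) ^ 2 / 2)))
      = fun x : ℝ => -(x ^ (2 * k + 1) * Real.exp (-(x ^ 2 / 2))) := by
    funext x
    rw [Odd.neg_pow ⟨k, by ring⟩, neg_sq]
    ring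
  rw [h2, integral_neg] at h
  have : M (2 * k + 1) = ∫ x : ℝ, x ^ (2 * k + 1) * Real.exp (-(x ^ 2 / 2)) := rfl
  rw [M] at *
  linarith

lemma hMrec (j : ℕ) : M (j + 2) = (j + 1 : ℝ) * M j := by
  set u : ℝ → ℝ := fun x => x ^ (j + 1) with hu_def
  set v : ℝ → ℝ := fun x => Real.exp (-(x ^ 2 / 2)) with hv_def
  set u' : ℝ → ℝ := fun x => ((j : ℝ) + 1) * x ^ j with hu'_def
  set v' : ℝ → ℝ := fun x => -(x * Real.exp (-(x ^ 2 / 2))) with hv'_def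
  have hu : ∀ x : ℝ, HasDerivAt u (u' x) x := by
    intro x
    simpa [hu_def, hu'_def] using hasDerivAt_pow (j + 1) x
  have hv : ∀ x : ℝ, HasDerivAt v (v' x) x := by
    intro x
    have h1 : HasDerivAt (fun x : ℝ => -(x ^ 2 / 2)) (-x) x := by
      simpa [Pi.neg_def] using ((hasDerivAt_pow 2 x).div_const 2).neg
    have := h1.exp
    simpa [hv_def, hv'_def, mul_comm] using this
  have huv' : Integrable (u * v') := by
    have := (intg (j + 2)).neg
    apply this.congr
    filter_upwards with x
    simp only [hu_def, hv'_def, Pi.mul_apply, Pi.neg_apply]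
    ring
  have hu'v : Integrable (u' * v) := by
    have := (intg j).const_mul ((j : ℝ) + 1)
    apply this.congr
    filter_upwards with x
    simp only [hu'_def, hv_def, Pi.mul_apply]
    ring
  have huv : Integrable (u * v) := by
    have := intg (j + 1)
    apply this.congr
    filter_upwards with x
    simp only [hu_def, hv_def, Pi.mul_apply]
  have key := MeasureTheory.integral_mul_deriv_eq_deriv_mul_of_integrable (fun x _ => hu x) (fun x _ => hv x) huv' hu'v huv
  have hL : ∫ x : ℝ, u x * v' x = -M (j + 2) := by
    rw [M, ← integral_neg]
    congr 1
    funext x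
    simp only [hu_def, hv'_def]
    ring
  have hR : ∫ x : ℝ, u' x * v x = ((j : ℝ) + 1) * M j := by
    rw [M, ← MeasureTheory.integral_const_mul]
    congr 1
    funext x
    simp only [hu'_def, hv_def]
    ring
  rw [hL, hR] at key
  push_cast
  linarith

lemma hMeven (k : ℕ) :
    M (2 * k) = ((2 * k).factorial : ℝ) / (2 ^ k * (k.factorial : ℝ)) * Real.sqrt (2 * Real.pi) := by
  induction k with
  | zero => simpa using hM0
  | succ k ih =>
    have h : 2 * (k + 1) = 2 * k + 2 := by ring
    rw [h, hMrec (2 * k), ih, show 2*k+2 = 2*(k+1) by ring]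
    have h1 : ((2 * (k + 1)).factorial : ℝ) = (2 * k + 2) * ((2 * k + 1) * ((2 * k).factorial)) := by
      have : 2 * (k + 1) = (2 * k + 1) + 1 := by ring
      rw [this, Nat.factorial_succ, Nat.factorial_succ]
      push_cast; ring
    rw [show k + 1 = k + 1 from rfl]
    have h2 : ((k + 1).factorial : ℝ) = (k + 1) * k.factorial := by
      rw [Nat.factorial_succ]; push_cast; ring
    rw [h1, h2]
    have hk : (k.factorial : ℝ) ≠ 0 := Nat.cast_ne_zero.mpr k.factorial_ne_zero
    have h2k : (2 : ℝ) ^ k ≠ 0 := by positivity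
    field_simp
    push_cast
    ring

lemma pdf_eq (x : ℝ) :
    gaussianPDFReal 0 1 x = (Real.sqrt (2 * Real.pi))⁻¹ * Real.exp (-(x ^ 2 / 2)) := by
  rw [gaussianPDFReal]
  norm_num
  left
  ring

lemma gauss_eq : gaussianReal 0 1 =
    volume.withDensity (fun x => ((Real.toNNReal (gaussianPDFReal 0 1 x) : ℝ≥0) : ℝ≥0∞)) := by
  rw [gaussianReal_of_var_ne_zero 0 one_ne_zero]
  rfl

lemma integral_gauss (g : ℝ → ℝ) :
    ∫ x, g x ∂(gaussianReal 0 1)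
      = (Real.sqrt (2 * Real.pi))⁻¹ * ∫ x, Real.exp (-(x ^ 2 / 2)) * g x := by
  rw [gauss_eq, integral_withDensity_eq_integral_smul
    ((measurable_gaussianPDFReal 0 1).real_toNNReal) g, ← MeasureTheory.integral_const_mul]
  congr 1
  funext x
  rw [NNReal.smul_def, Real.coe_toNNReal _ (gaussianPDFReal_nonneg 0 1 x), pdf_eq]
  simp [mul_assoc]

lemma integrable_gauss {g : ℝ → ℝ}
    (h : Integrable (fun x => Real.exp (-(x ^ 2 / 2)) * g x)) :
    Integrable g (gaussianReal 0 1) := by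
  rw [gauss_eq, integrable_withDensity_iff_integrable_smul
    ((measurable_gaussianPDFReal 0 1).real_toNNReal)]
  apply (h.const_mul (Real.sqrt (2 * Real.pi))⁻¹).congr
  filter_upwards with x
  rw [NNReal.smul_def, Real.coe_toNNReal _ (gaussianPDFReal_nonneg 0 1 x), pdf_eq, smul_eq_mul]
  ring

lemma integrable_pow_gauss (j : ℕ) : Integrable (fun x => x ^ j) (gaussianReal 0 1) := by
  apply integrable_gauss
  apply (intg j).congr
  filter_upwards with x
  ring

lemma P_eq (j : ℕ) :
    ∫ x, x ^ j ∂(gaussianReal 0 1) = (Real.sqrt (2 * Real.pi))⁻¹ * M j := by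
  rw [integral_gauss, M]
  congr 1
  congr 1
  funext x
  ring

lemma sqrt2pi_ne : Real.sqrt (2 * Real.pi) ≠ 0 := by
  positivity

lemma Pnu_eq (j : ℕ) :
    ∫ x, x ^ j ∂(gaussianReal 0 1)
      = if Even j then ((j.factorial : ℝ) / (2 ^ (j / 2) * ((j / 2).factorial : ℝ))) else 0 := by
  rcases Nat.even_or_odd j with ⟨k, hk⟩ | ⟨k, hk⟩
  · rw [if_pos ⟨k, hk⟩, P_eq, show j = 2 * k by omega, hMeven,
      show 2 * k / 2 = k by omega]
    field_simp
  · rw [if_neg (by simp [hk, Nat.not_even_iff_odd.mpr ⟨k, hk⟩] ), P_eq,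
      show j = 2 * k + 1 by omega, hModd, mul_zero]


theorem gaussian_moment_eq_sum {Ω : Type*} [MeasurableSpace Ω] (μ : MeasureTheory.Measure Ω)
    [MeasureTheory.IsProbabilityMeasure μ] (Y : Ω → ℝ) (hY : Measurable Y)
    (hYlaw : μ.map Y = ProbabilityTheory.gaussianReal 0 1)
    (lam : ℝ) (hlam : lam ≠ 0)
    (S1 : ℕ → ℕ → ℝ)
    (hS1 : ∀ (x : ℝ) (n : ℕ), ffall x n = ∑ k ∈ Finset.range (n + 1), S1 n k * x ^ k)
    (St2 : ℕ → ℕ → ℝ)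
    (hSt2 : ∀ (x : ℝ) (n : ℕ),
      dff lam x n = ∑ k ∈ Finset.range (n + 1), St2 n k * ffall x k)
    (n : ℕ) :
    (∫ ω, dff lam (Y ω) n ∂μ) =
      ∑ k ∈ Finset.range (n / 2 + 1), ∑ m ∈ Finset.Icc (2 * k) n,
        ((2 * k).factorial : ℝ) / (2 ^ k * (k.factorial : ℝ)) * S1 m (2 * k) * St2 n m := by
  set ν := gaussianReal 0 1 with hν
  -- Step 1: change of variables
  have hcont : Continuous (fun x : ℝ => dff lam x n) := by
    unfold dff
    exact continuous_finset_prod _ fun i _ => by continuity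
  have step1 : (∫ ω, dff lam (Y ω) n ∂μ) = ∫ x, dff lam x n ∂ν := by
    rw [← hYlaw]
    exact (integral_map hY.aemeasurable hcont.aestronglyMeasurable).symm
  rw [step1]
  -- integrability of ffall
  have intFfall : ∀ m : ℕ, Integrable (fun x => ffall x m) ν := by
    intro m
    have h := integrable_finset_sum (μ := ν) (Finset.range (m + 1))
      (fun j _ => (integrable_pow_gauss j).const_mul (S1 m j))
    exact h.congr (Filter.Eventually.of_forall fun x => (hS1 x m).symm)
  -- Step 2: expand dff into ffall
  have step2 : ∫ x, dff lam x n ∂ν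
      = ∑ m ∈ Finset.range (n + 1), St2 n m * ∫ x, ffall x m ∂ν := by
    rw [show (fun x => dff lam x n) = fun x => ∑ m ∈ Finset.range (n + 1), St2 n m * ffall x m
      from funext fun x => hSt2 x n]
    rw [integral_finset_sum _ (fun m _ => (intFfall m).const_mul (St2 n m))]
    exact Finset.sum_congr rfl fun m _ => MeasureTheory.integral_const_mul _ _
  rw [step2]
  -- Step 3: expand ffall into powers and evaluate moments
  have step3 : ∀ m : ℕ, ∫ x, ffall x m ∂ν
      = ∑ k ∈ Finset.range (m / 2 + 1),
          S1 m (2 * k) * (((2 * k).factorial : ℝ) / (2 ^ k * (k.factorial : ℝ))) := by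
    intro m
    rw [show (fun x => ffall x m) = fun x => ∑ j ∈ Finset.range (m + 1), S1 m j * x ^ j
      from funext fun x => hS1 x m]
    rw [integral_finset_sum _ (fun j _ => (integrable_pow_gauss j).const_mul (S1 m j))]
    have : ∀ j ∈ Finset.range (m + 1), (∫ x, S1 m j * x ^ j ∂ν)
        = S1 m j * (if Even j then ((j.factorial : ℝ) / (2 ^ (j / 2) * ((j / 2).factorial : ℝ))) else 0) := by
      intro j _
      rw [MeasureTheory.integral_const_mul, Pnu_eq]
    rw [Finset.sum_congr rfl this]
    simp_rw [mul_ite, mul_zero]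
    rw [← Finset.sum_filter]
    refine Finset.sum_nbij' (fun j => j / 2) (fun k => 2 * k) ?_ ?_ ?_ ?_ ?_
    · intro a ha
      simp only [Finset.mem_filter, Finset.mem_range] at ha ⊢
      omega
    · intro a ha
      simp only [Finset.mem_filter, Finset.mem_range] at ha ⊢
      constructor
      · omega
      · exact ⟨a, by ring⟩
    · intro a ha
      simp only [Finset.mem_filter, Finset.mem_range] at ha
      obtain ⟨-, k, hk⟩ := ha
      show 2 * (a / 2) = a
      omega
    · intro a ha
      show (2 * a) / 2 = a
      omega
    · intro a ha
      simp only [Finset.mem_filter, Finset.mem_range] at ha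
      obtain ⟨-, k, hk⟩ := ha
      beta_reduce
      rw [show 2 * (a / 2) = a by omega]
  rw [Finset.sum_congr rfl fun m _ => by rw [step3 m]]
  -- Step 4: reindex the double sum
  have step4 : ∀ m ∈ Finset.range (n + 1),
      St2 n m * ∑ k ∈ Finset.range (m / 2 + 1),
          S1 m (2 * k) * (((2 * k).factorial : ℝ) / (2 ^ k * (k.factorial : ℝ)))
      = ∑ k ∈ Finset.range (n / 2 + 1), (if 2 * k ≤ m then
          ((2 * k).factorial : ℝ) / (2 ^ k * (k.factorial : ℝ)) * S1 m (2 * k) * St2 n m else 0) := by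
    intro m hm
    simp only [Finset.mem_range] at hm
    rw [Finset.mul_sum, ← Finset.sum_filter]
    have hset : Finset.range (m / 2 + 1)
        = Finset.filter (fun k => 2 * k ≤ m) (Finset.range (n / 2 + 1)) := by
      ext a
      simp only [Finset.mem_filter, Finset.mem_range]
      omega
    rw [hset]
    exact Finset.sum_congr rfl fun a _ => by ring
  rw [Finset.sum_congr rfl step4, Finset.sum_comm]
  apply Finset.sum_congr rfl
  intro k _
  rw [← Finset.sum_filter]
  apply Finset.sum_congr _ (fun m _ => rfl)
  ext m
  simp only [Finset.mem_filter, Finset.mem_range, Finset.mem_Icc]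
  omega

end
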